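/- Lower bound on the number of non-real roots: for every nonzero real polynomial P of degree n, the number of non-real complex roots of P, counted with multiplicity, is at least n − z⁰(P) − v(P) − c(P). -/

import Mathlib

open Polynomial

/-- Number of sign changes in a list of reals, after discarding zero entries:
the number of consecutive pairs with negative product. -/
noncomputable def signChanges (l : List ℝ) : ℕ :=
  let l' := l.filter (fun x => decide (x ≠ 0))
  (l'.zip l'.tail).countP (fun p => decide (p.1 * p.2 < 0))

/-- `v(P)`: number of sign changes in the sequence of nonzero coefficients of `P`,
listed in order of increasing degree. -/
noncomputable def v (P : Polynomial ℝ) : ℕ :=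
  signChanges (List.ofFn fun i : Fin (P.natDegree + 1) => P.coeff i)

/-- `c(P) := v(P(-X))`: the number of sign permanences of `P` (minimization convention). -/
noncomputable def c (P : Polynomial ℝ) : ℕ :=
  v (P.comp (-Polynomial.X))

/-- `z⁺(P)`: number of positive real roots of `P`, with multiplicity. -/
noncomputable def zpos (P : Polynomial ℝ) : ℕ :=
  (P.roots.filter (fun x => 0 < x)).card

/-- `z⁻(P)`: number of negative real roots of `P`, with multiplicity. -/
noncomputable def zneg (P : Polynomial ℝ) : ℕ :=
  (P.roots.filter (fun x => x < 0)).card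


/-- filtered (nonzero) coefficient list -/
noncomputable def ncl (l : List ℝ) : List ℝ := l.filter (fun x => decide (x ≠ 0))

noncomputable def chg : List ℝ → ℕ
  | [] => 0
  | [_] => 0
  | a :: b :: l => (if a * b < 0 then 1 else 0) + chg (b :: l)

lemma countP_zip_eq_chg : ∀ l : List ℝ,
    (l.zip l.tail).countP (fun p => decide (p.1 * p.2 < 0)) = chg l
  | [] => rfl
  | [_] => rfl
  | a :: b :: l => by
    rw [chg]
    have : (a :: b :: l).zip (a :: b :: l).tail = (a, b) :: ((b :: l).zip (b :: l).tail) := rfl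
    rw [this, List.countP_cons, ← countP_zip_eq_chg (b :: l)]
    simp [Nat.add_comm]

lemma sc_eq (l : List ℝ) : signChanges l = chg (ncl l) := by
  simp only [signChanges, ncl]
  exact countP_zip_eq_chg _

lemma ncl_nil : ncl [] = [] := rfl

lemma ncl_cons (a : ℝ) (l : List ℝ) :
    ncl (a :: l) = if a = 0 then ncl l else a :: ncl l := by
  by_cases h : a = 0 <;> simp [ncl, List.filter_cons, h]

lemma mem_ncl_ne_zero {l : List ℝ} {x : ℝ} (hx : x ∈ ncl l) : x ≠ 0 := by
  have := List.of_mem_filter hx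
  simpa using this

-- sign arithmetic helpers
lemma sign_mul_iff {a b h : ℝ} (hab : 0 < a * b) : a * h < 0 ↔ b * h < 0 := by
  have ha : a ≠ 0 := by rintro rfl; simp at hab
  have hb : b ≠ 0 := by rintro rfl; simp at hab
  constructor <;> intro hh
  · by_contra hc
    push_neg at hc
    have h1 : 0 ≤ (a * b) * (b * h) := mul_nonneg hab.le hc
    have h2 : (a * b) * (b * h) = b ^ 2 * (a * h) := by ring
    have : 0 < b ^ 2 := by positivity
    nlinarith
  · by_contra hc
    push_neg at hc
    have h1 : 0 ≤ (a * b) * (a * h) := mul_nonneg hab.le hc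
    have h2 : (a * b) * (a * h) = a ^ 2 * (b * h) := by ring
    have : 0 < a ^ 2 := by positivity
    nlinarith

lemma sign_mul_iff₂ {a b a' b' : ℝ} (ha : 0 < a * a') (hb : 0 < b * b') :
    a * b < 0 ↔ a' * b' < 0 := by
  rw [mul_comm a b, sign_mul_iff hb, mul_comm b' a, sign_mul_iff ha]

-- chg lemmas
lemma chg_cons_le (a : ℝ) (l : List ℝ) : chg (a :: l) ≤ chg l + 1 := by
  cases l with
  | nil => simp [chg]
  | cons b m => rw [chg]; split <;> omega

lemma le_chg_cons (a : ℝ) (l : List ℝ) : chg l ≤ chg (a :: l) := by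
  cases l with
  | nil => simp [chg]
  | cons b m => rw [chg]; omega

lemma chg_sentinel {a b : ℝ} (hab : 0 < a * b) (F : List ℝ) : chg (a :: F) = chg (b :: F) := by
  cases F with
  | nil => rfl
  | cons h m =>
    rw [chg, chg]
    congr 1
    simp only [sign_mul_iff hab]

-- sc lemmas
lemma sc_cons_zero (l : List ℝ) : signChanges ((0:ℝ) :: l) = signChanges l := by
  simp [sc_eq, ncl_cons]

lemma sc_cons_ne {a : ℝ} (ha : a ≠ 0) (l : List ℝ) :
    signChanges (a :: l) = chg (a :: ncl l) := by
  rw [sc_eq, ncl_cons, if_neg ha]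

lemma sc_cons_cons {a b : ℝ} (ha : a ≠ 0) (hb : b ≠ 0) (l : List ℝ) :
    signChanges (a :: b :: l) = (if a * b < 0 then 1 else 0) + signChanges (b :: l) := by
  rw [sc_cons_ne ha, ncl_cons, if_neg hb, chg, sc_cons_ne hb]

lemma sc_cons_zero_mid (a : ℝ) (l : List ℝ) :
    signChanges (a :: (0:ℝ) :: l) = signChanges (a :: l) := by
  by_cases ha : a = 0
  · subst ha; rw [sc_cons_zero, sc_cons_zero]
  · rw [sc_cons_ne ha, sc_cons_ne ha, ncl_cons, if_pos rfl]

lemma le_sc_cons (a : ℝ) (l : List ℝ) : signChanges l ≤ signChanges (a :: l) := by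
  by_cases ha : a = 0
  · subst ha; rw [sc_cons_zero]
  · rw [sc_cons_ne ha, sc_eq]; exact le_chg_cons a _

lemma sc_cons_le (a : ℝ) (l : List ℝ) : signChanges (a :: l) ≤ signChanges l + 1 := by
  by_cases ha : a = 0
  · subst ha; rw [sc_cons_zero]; omega
  · rw [sc_cons_ne ha, sc_eq]; exact chg_cons_le a _

lemma sc_sentinel {a b : ℝ} (hab : 0 < a * b) (l : List ℝ) :
    signChanges (a :: l) = signChanges (b :: l) := by
  have ha : a ≠ 0 := by rintro rfl; simp at hab
  have hb : b ≠ 0 := by rintro rfl; simp at hab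
  rw [sc_cons_ne ha, sc_cons_ne hb, chg_sentinel hab]

def SameSign (a b : ℝ) : Prop := (a = 0 ∧ b = 0) ∨ 0 < a * b

lemma chg_congr : ∀ {l₁ l₂ : List ℝ}, List.Forall₂ (fun a b => 0 < a * b) l₁ l₂ →
    chg l₁ = chg l₂
  | [], [], _ => rfl
  | [_], [_], _ => rfl
  | a :: b :: l, a' :: b' :: l', h => by
    rcases h with _ | ⟨ha, h⟩
    rcases h with _ | ⟨hb, h⟩
    rw [chg, chg, chg_congr (List.Forall₂.cons hb h)]
    congr 1
    simp only [sign_mul_iff₂ ha hb]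

lemma ncl_congr : ∀ {l₁ l₂ : List ℝ}, List.Forall₂ SameSign l₁ l₂ →
    List.Forall₂ (fun a b => 0 < a * b) (ncl l₁) (ncl l₂)
  | [], [], _ => by simp [ncl]
  | a :: l, a' :: l', h => by
    rcases h with _ | ⟨ha, h⟩
    rcases ha with ⟨h1, h2⟩ | hpos
    · subst h1; subst h2
      rw [ncl_cons, ncl_cons, if_pos rfl, if_pos rfl]
      exact ncl_congr h
    · have h1 : a ≠ 0 := by rintro rfl; simp at hpos
      have h2 : a' ≠ 0 := by rintro rfl; simp at hpos
      rw [ncl_cons, ncl_cons, if_neg h1, if_neg h2]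
      exact List.Forall₂.cons hpos (ncl_congr h)

lemma sc_congr {l₁ l₂ : List ℝ} (h : List.Forall₂ SameSign l₁ l₂) :
    signChanges l₁ = signChanges l₂ := by
  rw [sc_eq, sc_eq, chg_congr (ncl_congr h)]

lemma ncl_map_neg : ∀ l : List ℝ, ncl (l.map (fun x => -x)) = (ncl l).map (fun x => -x)
  | [] => rfl
  | a :: l => by
    rw [List.map_cons, ncl_cons, ncl_cons]
    by_cases h : a = 0
    · simp [h, ncl_map_neg l]
    · rw [if_neg (by simpa using h), if_neg h, List.map_cons, ncl_map_neg l]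

lemma chg_map_neg : ∀ l : List ℝ, chg (l.map (fun x => -x)) = chg l
  | [] => rfl
  | [_] => rfl
  | a :: b :: l => by
    rw [List.map_cons, List.map_cons, chg, ← List.map_cons, chg_map_neg (b :: l), chg]
    congr 1
    rw [show -a * -b = a * b by ring]

lemma sc_map_neg (l : List ℝ) : signChanges (l.map (fun x => -x)) = signChanges l := by
  rw [sc_eq, sc_eq, ncl_map_neg, chg_map_neg]

lemma sc_append_zero (l : List ℝ) : signChanges (l ++ [(0:ℝ)]) = signChanges l := by
  rw [sc_eq, sc_eq]
  congr 1
  simp only [ncl, List.filter_append]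
  simp

lemma ncl_eq_nil : ∀ {L : List ℝ}, (∀ y ∈ L, y = 0) → ncl L = []
  | [], _ => rfl
  | a :: L, h => by
    rw [ncl_cons, if_pos (h a (by simp))]
    exact ncl_eq_nil (fun y hy => h y (by simp [hy]))

lemma sc_cons_all_zero (s : ℝ) {L : List ℝ} (hL : ∀ y ∈ L, y = 0) :
    signChanges (s :: L) = 0 := by
  rw [sc_eq, ncl_cons, ncl_eq_nil hL]
  split <;> rfl

lemma scanl_all_zero : ∀ (t : List ℝ), (∀ x ∈ t, x = 0) →
    ∀ y ∈ List.scanl (· + ·) (0:ℝ) t, y = 0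
  | [], _ => by simp
  | a :: t, h => by
    have ha : a = 0 := h a (by simp)
    rw [List.scanl_cons]
    intro y hy
    rcases List.mem_cons.1 hy with h0 | h0
    · exact h0
    · have := scanl_all_zero t (fun x hx => h x (by simp [hx]))
      rw [ha, add_zero] at h0
      exact this y h0

lemma scanl_head (s : ℝ) (t : List ℝ) : ∃ rest, List.scanl (· + ·) s t = s :: rest := by
  cases t <;> simp

lemma key : ∀ (n : ℕ) (w : List ℝ), w.length ≤ n →
    (signChanges (List.scanl (· + ·) 0 w) +
      (if w.sum = 0 ∧ ∃ x ∈ w, x ≠ 0 then 1 else 0) ≤ signChanges w) ∧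
    (∀ s : ℝ, s ≠ 0 → signChanges (List.scanl (· + ·) s w) +
      (if s + w.sum = 0 then 1 else 0) ≤ signChanges (s :: w)) := by
  intro n
  induction n with
  | zero =>
    intro w hw
    have : w = [] := List.length_eq_zero_iff.1 (Nat.le_zero.1 hw)
    subst this
    constructor
    · simp [List.scanl_nil, sc_cons_zero]
    · intro s hs
      simp only [List.scanl_nil, List.sum_nil, add_zero, if_neg hs]
      simp
  | succ n ih =>
    intro w hw
    cases w with
    | nil =>
      constructor
      · simp [List.scanl_nil, sc_cons_zero]
      · intro s hs
        simp only [List.scanl_nil, List.sum_nil, add_zero, if_neg hs]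
        simp
    | cons x t =>
      have ht : t.length ≤ n := by simpa using hw
      constructor
      -- G₀ part
      · rw [List.scanl_cons, sc_cons_zero, zero_add]
        by_cases hx : x = 0
        · subst hx
          have h1 := (ih t ht).1
          rw [sc_cons_zero]
          refine le_trans (le_of_eq ?_) h1
          congr 1
          simp
        · have h2 := (ih t ht).2 x hx
          refine le_trans (le_of_eq ?_) h2
          congr 1
          simp [hx, List.sum_cons]
      -- G part
      · intro s hs
        rw [List.scanl_cons]
        by_cases hx : x = 0
        · -- case x = 0
          subst hx
          rw [add_zero]
          obtain ⟨rest, hrest⟩ := scanl_head s t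
          rw [hrest, sc_cons_cons hs hs, if_neg (by nlinarith [mul_self_nonneg s]), ← hrest,
            sc_cons_zero_mid]
          have h2 := (ih t ht).2 s hs
          simpa using h2
        · set s' := s + x with hs'
          by_cases hss : s' = 0
          · -- B2 : s' = 0
            rw [hss]
            have hsx : s * x < 0 := by
              have : x = -s := by linarith [hs'.symm ▸ hss]
              rw [this]
              have h2 : (0:ℝ) < s^2 := by positivity
              nlinarith
            rw [sc_cons_cons hs hx, if_pos hsx]
            have hsum : s + (x :: t).sum = t.sum := by
              simp only [List.sum_cons]
              have : x = -s := by
                have := hss; rw [hs'] at this; linarith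
              rw [this]; ring
            rw [hsum]
            by_cases hz : ∀ y ∈ t, y = 0
            · have hall := scanl_all_zero t hz
              rw [sc_cons_all_zero s hall]
              have : t.sum = 0 := List.sum_eq_zero hz
              rw [if_pos this]
              have : (1:ℕ) ≤ 1 + signChanges (x :: t) := by omega
              simpa using this
            · push_neg at hz
              obtain ⟨y, hy, hyne⟩ := hz
              have h1 := (ih t ht).1
              rw [if_congr (show (t.sum = 0 ∧ ∃ x ∈ t, x ≠ 0) ↔ t.sum = 0 from
                ⟨fun h => h.1, fun h => ⟨h, y, hy, hyne⟩⟩) rfl rfl] at h1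
              have h3 : signChanges (s :: List.scanl (· + ·) 0 t) ≤
                  signChanges (List.scanl (· + ·) 0 t) + 1 := sc_cons_le _ _
              have h4 : signChanges t ≤ signChanges (x :: t) := le_sc_cons _ _
              omega
          · -- B1 : s' ≠ 0
            obtain ⟨rest, hrest⟩ := scanl_head s' t
            rw [hrest, sc_cons_cons hs hss, ← hrest]
            have h2 := (ih t ht).2 s' hss
            have hsum : s + (x :: t).sum = s' + t.sum := by
              simp only [List.sum_cons, hs']; ring
            rw [hsum]
            rw [sc_cons_cons hs hx]
            rcases lt_trichotomy (x * s') 0 with hneg | hzero | hpos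
            · -- x and s' opposite signs : s and s' same sign
              have hss2 : 0 < s * s' := by
                rcases lt_trichotomy 0 s' with h1 | h1 | h1
                · have hx2 : x < 0 := by nlinarith
                  have : 0 < s := by rw [hs'] at *; nlinarith
                  nlinarith
                · exact absurd h1.symm hss
                · have hx2 : 0 < x := by nlinarith
                  have : s < 0 := by rw [hs'] at *; nlinarith
                  nlinarith
              have hc1 : ¬ (s * s' < 0) := by nlinarith
              have hc2 : s * x < 0 := by
                have := (sign_mul_iff hss2 (h := x)).2
                apply this
                rw [mul_comm] at hneg; exact hneg
              rw [if_neg hc1, if_pos hc2]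
              have h5 : signChanges (s' :: t) ≤ signChanges t + 1 := sc_cons_le _ _
              have h6 : signChanges t ≤ signChanges (x :: t) := le_sc_cons _ _
              omega
            · exact absurd hzero (mul_ne_zero hx hss)
            · -- x and s' same sign
              have heq1 : signChanges (s' :: t) = signChanges (x :: t) := by
                rw [mul_comm] at hpos
                exact sc_sentinel (by nlinarith) t
              have heq2 : (s * s' < 0) ↔ (s * x < 0) := by
                rw [mul_comm s s', mul_comm s x]
                exact sign_mul_iff (by rw [mul_comm] at hpos; exact hpos)
              rw [if_congr heq2 rfl rfl]
              rw [heq1] at h2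
              omega

lemma forall₂_ofFn {m : ℕ} (f g : Fin m → ℝ) (h : ∀ i, SameSign (f i) (g i)) :
    List.Forall₂ SameSign (List.ofFn f) (List.ofFn g) := by
  induction m with
  | zero => simp
  | succ m ih =>
    rw [List.ofFn_succ, List.ofFn_succ]
    exact List.Forall₂.cons (h 0) (ih _ _ (fun i => h i.succ))

lemma sameSign_mul_pow {c r : ℝ} (hr : 0 < r) (k : ℕ) : SameSign (c * r ^ k) c := by
  by_cases hc : c = 0
  · exact Or.inl ⟨by simp [hc], hc⟩
  · right
    have h1 : 0 < r ^ k := pow_pos hr k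
    have : c * r ^ k * c = c ^ 2 * r ^ k := by ring
    rw [this]
    positivity

lemma scanl_ofFn (f : ℕ → ℝ) : ∀ (m : ℕ) (s : ℝ),
    List.scanl (· + ·) s (List.ofFn (fun i : Fin m => f i)) =
      s :: List.ofFn (fun j : Fin m => s + ∑ i ∈ Finset.range ((j:ℕ)+1), f i) := by
  intro m
  induction m generalizing f with
  | zero => intro s; simp
  | succ m ih =>
    intro s
    rw [List.ofFn_succ, List.scanl_cons, List.ofFn_succ]
    simp only [Fin.val_succ, Fin.val_zero]
    rw [ih (fun i => f (i+1)) (s + f 0)]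
    congr 1
    congr 1
    · rw [Finset.sum_range_one]
    · congr 1
      funext j
      rw [Finset.sum_range_succ' (fun i => f i) ((j:ℕ)+1)]
      ring

lemma coeff_X_sub_C_mul (Q : Polynomial ℝ) (r : ℝ) (k : ℕ) :
    ((X - C r) * Q).coeff (k + 1) = Q.coeff k - r * Q.coeff (k + 1) := by
  rw [sub_mul, coeff_sub, coeff_X_mul, coeff_C_mul]

lemma coeff_X_sub_C_mul_zero (Q : Polynomial ℝ) (r : ℝ) :
    ((X - C r) * Q).coeff 0 = -(r * Q.coeff 0) := by
  rw [mul_coeff_zero, coeff_sub, coeff_X_zero, coeff_C]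
  simp

lemma psum (Q : Polynomial ℝ) (r : ℝ) :
    ∀ j : ℕ, ∑ i ∈ Finset.range (j+1), ((X - C r) * Q).coeff i * r ^ i
      = -(Q.coeff j * r ^ (j+1)) := by
  intro j
  induction j with
  | zero => simp [coeff_X_sub_C_mul_zero]; ring
  | succ j ih =>
    rw [Finset.sum_range_succ, ih, coeff_X_sub_C_mul]
    ring

lemma v_mul_X_sub_C {r : ℝ} (hr : 0 < r) {Q : Polynomial ℝ} (hQ : Q ≠ 0) :
    v Q + 1 ≤ v ((X - C r) * Q) := by
  set n := Q.natDegree with hn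
  set R := (X - C r) * Q with hRdef
  have hXr : (X - C r) ≠ 0 := X_sub_C_ne_zero r
  have hR : R ≠ 0 := mul_ne_zero hXr hQ
  have hdeg : R.natDegree = n + 1 := by
    rw [hRdef, natDegree_mul hXr hQ, natDegree_X_sub_C, add_comm]
  set f : ℕ → ℝ := fun i => R.coeff i * r ^ i with hf
  set w : List ℝ := List.ofFn (fun i : Fin (n+2) => f i) with hw
  -- (a) sc w = v R
  have ha : signChanges w = v R := by
    have h1 : v R = signChanges (List.ofFn fun i : Fin (n + 2) => R.coeff i) := by
      unfold v
      congr 1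
      rw [hdeg]
    rw [h1, hw]
    exact sc_congr (forall₂_ofFn _ _ (fun i => sameSign_mul_pow hr _))
  -- (b) sum w = 0
  have hb : w.sum = 0 := by
    rw [hw, List.sum_ofFn]
    have : ∑ i : Fin (n+2), f i = ∑ i ∈ Finset.range (n+2), R.coeff i * r ^ i := by
      rw [Finset.sum_range]
    rw [this]
    have heval : R.eval r = ∑ i ∈ Finset.range (n+2), R.coeff i * r ^ i :=
      eval_eq_sum_range' (by omega : R.natDegree < n + 2) r
    rw [← heval, hRdef]
    simp
  -- (c) some nonzero entry
  have hc : ∃ x ∈ w, x ≠ 0 := by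
    refine ⟨f (n+1), ?_, ?_⟩
    · rw [hw]
      exact List.mem_ofFn.2 ⟨⟨n+1, by omega⟩, rfl⟩
    · rw [hf]
      have h1 : R.coeff (n+1) ≠ 0 := by
        rw [← hdeg]
        exact (leadingCoeff_ne_zero.2 hR)
      exact mul_ne_zero h1 (pow_ne_zero _ hr.ne')
  -- (d) signChanges of scanl = v Q
  have hd : signChanges (List.scanl (· + ·) 0 w) = v Q := by
    rw [hw, scanl_ofFn f (n+2) 0, sc_cons_zero]
    have h1 : (List.ofFn fun j : Fin (n+2) => (0:ℝ) + ∑ i ∈ Finset.range ((j:ℕ)+1), f i)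
        = List.ofFn fun j : Fin (n+2) => -(Q.coeff j * r ^ ((j:ℕ)+1)) := by
      congr 1
      funext j
      rw [zero_add, hf, psum]
    rw [h1]
    have h2 : (List.ofFn fun j : Fin (n+2) => -(Q.coeff j * r ^ ((j:ℕ)+1)))
        = (List.ofFn fun j : Fin (n+2) => Q.coeff j * r ^ ((j:ℕ)+1)).map (fun x => -x) := by
      rw [List.map_ofFn]
      rfl
    rw [h2, sc_map_neg]
    have h3 : signChanges (List.ofFn fun j : Fin (n+2) => Q.coeff j * r ^ ((j:ℕ)+1))
        = signChanges (List.ofFn fun j : Fin (n+2) => Q.coeff j) :=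
      sc_congr (forall₂_ofFn _ _ (fun i => sameSign_mul_pow hr _))
    rw [h3]
    have h4 : (List.ofFn fun j : Fin (n+2) => Q.coeff j)
        = (List.ofFn fun j : Fin (n+1) => Q.coeff j) ++ [(0:ℝ)] := by
      rw [List.ofFn_succ', List.concat_eq_append]
      have hz : Q.coeff (↑(Fin.last (n+1))) = (0:ℝ) := by
        rw [Fin.val_last]
        exact coeff_eq_zero_of_natDegree_lt (by omega)
      rw [hz]
      congr 1
    rw [h4, sc_append_zero]
    rfl
  have hkey := (key w.length w le_rfl).1
  rw [if_pos ⟨hb, hc⟩, hd, ha] at hkey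
  exact hkey

lemma zpos_le_v : ∀ (d : ℕ) (Q : Polynomial ℝ), Q ≠ 0 → Q.natDegree ≤ d → zpos Q ≤ v Q := by
  intro d
  induction d with
  | zero =>
    intro Q hQ hd
    by_cases h : zpos Q = 0
    · omega
    · exfalso
      have h1 : (Q.roots.filter (fun x => 0 < x)).card ≤ Q.roots.card :=
        Multiset.card_le_card (Multiset.filter_le _ _)
      have h2 := Polynomial.card_roots' Q
      unfold zpos at h
      omega
  | succ d ih =>
    intro Q hQ hd
    by_cases h : zpos Q = 0
    · omega
    · have hpos : 0 < (Q.roots.filter (fun x => 0 < x)).card := by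
        unfold zpos at h; omega
      obtain ⟨r, hr⟩ := Multiset.card_pos_iff_exists_mem.1 hpos
      rw [Multiset.mem_filter] at hr
      obtain ⟨hrr, hrpos⟩ := hr
      have hroot : Q.IsRoot r := (Polynomial.mem_roots hQ).1 hrr
      obtain ⟨Q', hQ'⟩ := (Polynomial.dvd_iff_isRoot).2 hroot
      have hQ'ne : Q' ≠ 0 := by rintro rfl; rw [mul_zero] at hQ'; exact hQ hQ'
      have hXr : (X - C r) ≠ 0 := X_sub_C_ne_zero r
      have hdeg : Q.natDegree = Q'.natDegree + 1 := by
        rw [hQ', natDegree_mul hXr hQ'ne, natDegree_X_sub_C, add_comm]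
      have hzp : zpos Q = zpos Q' + 1 := by
        unfold zpos
        rw [hQ', Polynomial.roots_mul (hQ' ▸ hQ), roots_X_sub_C, Multiset.filter_add,
          Multiset.filter_singleton, if_pos hrpos]
        simp [add_comm]
      have hv : v Q' + 1 ≤ v Q := by rw [hQ']; exact v_mul_X_sub_C hrpos hQ'ne
      have := ih Q' hQ'ne (by omega)
      omega

lemma comp_negX_negX (P : Polynomial ℝ) : (P.comp (-X)).comp (-X) = P := by
  rw [Polynomial.comp_assoc]
  simp

lemma comp_negX_ne_zero {P : Polynomial ℝ} (hP : P ≠ 0) : P.comp (-X) ≠ 0 := by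
  intro h
  apply hP
  rw [← comp_negX_negX P, h, Polynomial.zero_comp]

lemma rm_comp_le (P : Polynomial ℝ) (x : ℝ) (hP : P ≠ 0) :
    rootMultiplicity (-x) P ≤ rootMultiplicity x (P.comp (-X)) := by
  set m := rootMultiplicity (-x) P with hm
  obtain ⟨T, hT⟩ := pow_rootMultiplicity_dvd P (-x)
  rw [le_rootMultiplicity_iff (comp_negX_ne_zero hP)]
  refine ⟨(-1)^m * T.comp (-X), ?_⟩
  have h1 : P.comp (-X) = (((X - C (-x)) ^ m) * T).comp (-X) := by rw [← hT]
  rw [h1, Polynomial.mul_comp, Polynomial.pow_comp, Polynomial.sub_comp,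
    Polynomial.X_comp, Polynomial.C_comp]
  have h2 : (-X - C (-x) : Polynomial ℝ) = -(X - C x) := by
    rw [map_neg]; ring
  rw [h2, neg_pow]
  ring

lemma rm_comp_eq (P : Polynomial ℝ) (x : ℝ) (hP : P ≠ 0) :
    rootMultiplicity x (P.comp (-X)) = rootMultiplicity (-x) P := by
  refine le_antisymm ?_ (rm_comp_le P x hP)
  have := rm_comp_le (P.comp (-X)) (-x) (comp_negX_ne_zero hP)
  rwa [neg_neg, comp_negX_negX] at this

lemma roots_comp_negX {P : Polynomial ℝ} (hP : P ≠ 0) :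
    (P.comp (-X)).roots = P.roots.map (fun x => -x) := by
  classical
  ext a
  have h2 : a = -(-a) := by ring
  rw [Polynomial.count_roots, rm_comp_eq P a hP]
  conv_rhs => rw [h2, Multiset.count_map_eq_count' _ _ neg_injective]
  rw [Polynomial.count_roots]

lemma zneg_le_c {P : Polynomial ℝ} (hP : P ≠ 0) : zneg P ≤ c P := by
  have h1 : zneg P = zpos (P.comp (-X)) := by
    unfold zneg zpos
    rw [roots_comp_negX hP, Multiset.filter_map, Multiset.card_map]
    congr 1
    apply Multiset.filter_congr
    intro x _
    simp [Function.comp, neg_pos]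
  rw [h1]
  exact zpos_le_v _ _ (comp_negX_ne_zero hP) le_rfl

/-- Lower bound on the number of non-real roots: the number of non-real complex roots
of `P`, with multiplicity, is at least `deg(P) - z⁰(P) - v(P) - c(P)`. -/
theorem nonreal_roots_lower_bound (P : Polynomial ℝ) (hP : P ≠ 0) :
    (P.natDegree : ℤ) - P.rootMultiplicity 0 - v P - c P ≤
      (((P.map (algebraMap ℝ ℂ)).roots.filter (fun z => z.im ≠ 0)).card : ℤ) := by
  classical
  set f := algebraMap ℝ ℂ with hf
  have hinj : Function.Injective f := (algebraMap ℝ ℂ).injective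
  have hmap : P.map f ≠ 0 := Polynomial.map_ne_zero hP
  have hsplit : Splits (P.map f) := IsAlgClosed.splits _
  have hcard : P.natDegree = (P.map f).roots.card := by
    rw [← natDegree_map f]; exact hsplit.natDegree_eq_card_roots
  set S := (P.map f).roots with hS
  have hfil : (S.filter (fun z => z.im ≠ 0)).card + (S.filter (fun z => ¬ z.im ≠ 0)).card
      = S.card := by
    rw [← Multiset.card_add, Multiset.filter_add_not]
  -- real roots of the complexification come from real roots
  have him : (S.filter (fun z => ¬ z.im ≠ 0)).card ≤ P.roots.card := by
    have hle : S.filter (fun z => ¬ z.im ≠ 0) ≤ P.roots.map (fun x => f x) := by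
      rw [Multiset.le_iff_count]
      intro z
      rw [Multiset.count_filter]
      split
      · next h =>
        push_neg at h
        have hz : f z.re = z := Complex.ext (by simp [hf]) (by simp [hf, h])
        refine le_of_eq ?_
        calc S.count z = rootMultiplicity z (P.map f) := Polynomial.count_roots _
          _ = rootMultiplicity z.re P := by
              conv_rhs => rw [eq_rootMultiplicity_map hinj]
              rw [hz]
          _ = P.roots.count z.re := (Polynomial.count_roots _).symm
          _ = (P.roots.map (fun x => f x)).count z := by
              conv_rhs => rw [← hz]
              rw [Multiset.count_map_eq_count' _ _ hinj]
      · omega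
    calc (S.filter (fun z => ¬ z.im ≠ 0)).card ≤ (P.roots.map (fun x => f x)).card :=
          Multiset.card_le_card hle
      _ = P.roots.card := Multiset.card_map _ _
  -- trichotomy of real roots
  have htri : (P.roots.filter (fun x => 0 < x)).card + (P.roots.filter (fun x => x < 0)).card
      + P.roots.count 0 = P.roots.card := by
    have heq : P.roots.filter (fun x => 0 < x) + (P.roots.filter (fun x => x < 0)
        + P.roots.filter (fun x => x = 0)) = P.roots := by
      ext a
      simp only [Multiset.count_add, Multiset.count_filter]
      split_ifs with h1 h2 h3 <;> first | omega | (exfalso; linarith) |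
        (exfalso; rcases lt_trichotomy a 0 with h | h | h <;> simp_all) 
    have hc0 : P.roots.count 0 = (P.roots.filter (fun x => x = 0)).card := by
      rw [Multiset.count_eq_card_filter_eq]
      congr 1
      apply Multiset.filter_congr
      intro x _
      exact eq_comm
    rw [hc0]
    calc _ = (P.roots.filter (fun x => 0 < x) + (P.roots.filter (fun x => x < 0)
        + P.roots.filter (fun x => x = 0))).card := by
          rw [Multiset.card_add, Multiset.card_add]; omega
      _ = P.roots.card := by rw [heq]
  have hz0 : P.roots.count 0 = P.rootMultiplicity 0 := Polynomial.count_roots P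
  have hv : zpos P ≤ v P := zpos_le_v P.natDegree P hP le_rfl
  have hc : zneg P ≤ c P := zneg_le_c hP
  unfold zpos at hv
  unfold zneg at hc
  omega
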